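/- Let D be the dominator tree of a flow graph G, and suppose for each non-leaf vertex w of D we are given a low-high order δ_w of the derived flow graph G_w. Then the preorder δ of D obtained by a depth-first traversal of D that visits the children of each vertex w in the order δ_w is a low-high order of G. -/
import Mathlib


open scoped Classical

namespace Dominators

variable {V : Type*}

/-- A walk in a digraph `E` from `u` to `w`, recorded as the list of its vertices. -/
inductive Walk (E : V → V → Prop) : V → V → List V → Prop
  | nil (v : V) : Walk E v v [v]
  | cons {u v w : V} {p : List V} (h : E u v) (hw : Walk E v w p) : Walk E u w (u :: p)

/-- `v` is reachable from `s` in the flow graph `(E, s)`. -/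
def Reachable (E : V → V → Prop) (s v : V) : Prop := ∃ p, Walk E s v p

/-- `v` dominates `w` in the flow graph `(E, s)`: every walk from `s` to `w` contains `v`.
In the dominator tree `D`, `v` is an ancestor of `w` iff `v` dominates `w`. -/
def Dom (E : V → V → Prop) (s v w : V) : Prop := ∀ p, Walk E s w p → v ∈ p

/-- `v` is the immediate dominator of `w` (the parent of `w` in the dominator tree):
a proper dominator of `w` that is dominated by every proper dominator of `w`. -/
def IsIdom (E : V → V → Prop) (s v w : V) : Prop :=
  v ≠ w ∧ Dom E s v w ∧ ∀ u, u ≠ w → Dom E s u w → Dom E s u v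

/-- `z` is the nearest common ancestor of `x` and `y` in the dominator tree of `(E, s)`. -/
def IsNca (E : V → V → Prop) (s z x y : V) : Prop :=
  Dom E s z x ∧ Dom E s z y ∧ ∀ u, Dom E s u x → Dom E s u y → Dom E s u z

/-- The graph obtained from `E` by inserting the edge `(x, y)`. -/
def Ins (E : V → V → Prop) (x y : V) : V → V → Prop := fun a b => E a b ∨ (a = x ∧ b = y)

/-- `v` is affected by the insertion of edge `(x, y)`: its immediate dominator
(parent in the dominator tree) changes. -/
def Affected (E : V → V → Prop) (s x y v : V) : Prop :=
  ∃ a b, IsIdom E s a v ∧ IsIdom (Ins E x y) s b v ∧ a ≠ b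

/-- `depth` is a depth function for the dominator tree of `(E, s)`. -/
def IsDepth (E : V → V → Prop) (s : V) (depth : V → ℕ) : Prop :=
  depth s = 0 ∧ ∀ v u, Reachable E s v → v ≠ s → IsIdom E s u v → depth v = depth u + 1

/-- `δ` is a preorder of the dominator tree of `(E, s)`: it is injective on reachable
vertices, every vertex precedes (or equals) its descendants, and the descendants of every
vertex are consecutive. -/
def IsPreorderOfD (E : V → V → Prop) (s : V) (δ : V → ℕ) : Prop :=
  (∀ u v, Reachable E s u → Reachable E s v → u ≠ v → δ u ≠ δ v) ∧
  (∀ v u, Reachable E s u → Dom E s v u → δ v ≤ δ u) ∧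
  (∀ v a b, Reachable E s b → Dom E s v a → δ v ≤ δ b → δ b ≤ δ a → Dom E s v b)

/-- `δ` is a low-high order for the vertex `v` in `(E, s)`: either the edge from the
parent `d(v)` of `v` in the dominator tree is in `E`, or `v` has two entering edges
`(u, v)` and `(w, v)` with `u`, `w` reachable, `u <_δ v <_δ w`, and `w` not a
descendant of `v` in the dominator tree. -/
def LowHighFor (E : V → V → Prop) (s : V) (δ : V → ℕ) (v : V) : Prop :=
  (∃ q, IsIdom E s q v ∧ E q v) ∨
  ∃ u w, E u v ∧ E w v ∧ Reachable E s u ∧ Reachable E s w ∧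
    δ u < δ v ∧ δ v < δ w ∧ ¬ Dom E s v w

/-- `δ` is a low-high order of the flow graph `(E, s)`. -/
def IsLowHigh (E : V → V → Prop) (s : V) (δ : V → ℕ) : Prop :=
  IsPreorderOfD E s δ ∧ ∀ v, Reachable E s v → v ≠ s → LowHighFor E s δ v

/-- The edge relation of the spanning tree with parent function `par`, rooted at `s`,
on the vertices reachable in `(E, s)`. -/
def TreeRel (E : V → V → Prop) (s : V) (par : V → V) : V → V → Prop :=
  fun a b => Reachable E s b ∧ b ≠ s ∧ par b = a

/-- `par` is (the parent function of) a spanning tree of the flow graph `(E, s)`. -/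
def IsSpanningTree (E : V → V → Prop) (s : V) (par : V → V) : Prop :=
  (∀ v, Reachable E s v → v ≠ s → E (par v) v) ∧
  (∀ v, Reachable E s v → ∃ p, Walk (TreeRel E s par) s v p)

/-- The spanning trees with parent functions `b` and `r` are divergent: for every
reachable `v`, the tree paths from `s` to `v` share only the dominators of `v`. -/
def Divergent (E : V → V → Prop) (s : V) (b r : V → V) : Prop :=
  ∀ v p q, Reachable E s v → Walk (TreeRel E s b) s v p → Walk (TreeRel E s r) s v q →
    ∀ u, u ∈ p → u ∈ q → Dom E s u v

/-- The edge relation of the derived flow graph `G_w` of `w`: its vertices are `w` and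
the children of `w` in the dominator tree, and for each edge `(σ, b)` of `G` with `b` a
child of `w` and `b` not an ancestor of `σ`, it contains the derived edge `(a, b)`
where `a = w` if `σ = w`, and otherwise `a` is the child of `w` (sibling of `b`) that
is an ancestor of `σ`. -/
def DerivedEdge (E : V → V → Prop) (s w : V) : V → V → Prop := fun a b =>
  IsIdom E s w b ∧ ∃ σ, E σ b ∧ ¬ Dom E s b σ ∧
    ((σ = w ∧ a = w) ∨ (σ ≠ w ∧ IsIdom E s w a ∧ Dom E s a σ))

section Aux

variable {E : V → V → Prop} {s x y z u v w : V} {p q r : List V}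

theorem walk_head (h : Walk E x y p) : ∃ t, p = x :: t := by
  cases h <;> exact ⟨_, rfl⟩

theorem walk_start_mem (h : Walk E x y p) : x ∈ p := by
  obtain ⟨t, rfl⟩ := walk_head h; simp

theorem walk_end_mem (h : Walk E x y p) : y ∈ p := by
  induction h with
  | nil => simp
  | cons h hw ih => simp [ih]

theorem walk_split_last (h : Walk E x y p) (hu : u ∈ p) :
    ∃ q r, p = q ++ u :: r ∧ Walk E x u (q ++ [u]) ∧ Walk E u y (u :: r) ∧ u ∉ r := by
  induction h with
  | nil v =>
      simp only [List.mem_singleton] at hu; subst hu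
      exact ⟨[], [], rfl, Walk.nil u, Walk.nil u, by simp⟩
  | @cons a b c p' h hw ih =>
      by_cases hmem : u ∈ p'
      · obtain ⟨q, r, hp, h1, h2, h3⟩ := ih hmem
        exact ⟨a :: q, r, by rw [hp]; simp, Walk.cons h h1, h2, h3⟩
      · have hua : u = a := by
          rcases List.mem_cons.1 hu with h' | h'
          · exact h'
          · exact absurd h' hmem
        subst hua
        exact ⟨[], p', rfl, Walk.nil u, Walk.cons h hw, hmem⟩

theorem walk_append (h1 : Walk E x y q) (h2 : Walk E y z (y :: r)) :
    Walk E x z (q ++ r) := by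
  induction h1 with
  | nil v => exact h2
  | cons h hw ih => exact Walk.cons h (ih h2)

theorem reachable_of_mem_walk (h : Walk E s y p) (hu : u ∈ p) : Reachable E s u := by
  obtain ⟨q, r, -, h1, -, -⟩ := walk_split_last h hu
  exact ⟨_, h1⟩

theorem reachable_of_dom (hd : Dom E s u v) (hv : Reachable E s v) : Reachable E s u := by
  obtain ⟨p, hw⟩ := hv
  exact reachable_of_mem_walk hw (hd p hw)

theorem reachable_of_not_dom {b σ : V} (h : ¬ Dom E s b σ) : Reachable E s σ := by
  by_contra hr
  exact h fun p hw => absurd ⟨p, hw⟩ hr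

theorem exists_isIdom (hv : Reachable E s v) (hvs : v ≠ s) : ∃ w, IsIdom E s w v := by
  classical
  obtain ⟨p, hp⟩ := hv
  have hS : ∃ n, ∃ u q r, u ≠ v ∧ Dom E s u v ∧ p = q ++ u :: r ∧
      Walk E u v (u :: r) ∧ u ∉ r ∧ r.length = n := by
    obtain ⟨q, r, h1, h2, h3, h4⟩ := walk_split_last hp (walk_start_mem hp)
    exact ⟨r.length, s, q, r, hvs.symm, fun p' hw' => walk_start_mem hw', h1, h3, h4, rfl⟩
  obtain ⟨u0, q0, r0, hne, hdom, hsplit, hwalk, hnotin, hlen⟩ := Nat.find_spec hS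
  refine ⟨u0, hne, hdom, ?_⟩
  intro u huv hudom
  have hur : u ∉ r0 := by
    intro hmem
    obtain ⟨q', r', hp', h2', h3', h4'⟩ := walk_split_last hwalk (List.mem_cons_of_mem _ hmem)
    have hlt : r'.length < Nat.find hS := by
      have hne2 : u ≠ u0 := fun h => hnotin (h ▸ hmem)
      cases q' with
      | nil =>
          simp only [List.nil_append, List.cons.injEq] at hp'
          exact absurd hp'.1.symm hne2
      | cons a t =>
          have hl := congrArg List.length hp'
          simp only [List.length_cons, List.length_append] at hl
          omega
    exact Nat.find_min hS hlt
      ⟨u, q0 ++ q', r', huv, hudom, by rw [hsplit, hp', List.append_assoc], h3', h4', rfl⟩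
  intro q hq
  have hw2 : Walk E s v (q ++ r0) := walk_append hq hwalk
  rcases List.mem_append.1 (hudom _ hw2) with h | h
  · exact h
  · exact absurd h hur

end Aux

/-- If `δ` is a preorder of the dominator tree of `(G, s)` such that for
every non-leaf `w` the order induced by `δ` on the children of `w` is a low-high order
of the derived flow graph `G_w` (i.e. each child `v` of `w` either has the edge
`(w, v)` in `G_w`, or has two derived edges entering it from siblings `a`, `b` with
`δ a < δ v < δ b`), then `δ` is a low-high order of `G`. -/
theorem stmt17 (E : V → V → Prop) (s : V) (δ : V → ℕ)
    (hpre : IsPreorderOfD E s δ)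
    (hloc : ∀ w v, IsIdom E s w v →
      (DerivedEdge E s w w v ∨
       ∃ a b, DerivedEdge E s w a v ∧ DerivedEdge E s w b v ∧ a ≠ w ∧ b ≠ w ∧
         δ a < δ v ∧ δ v < δ b)) :
    IsLowHigh E s δ := by
  refine ⟨hpre, fun v hv hvs => ?_⟩
  obtain ⟨w, hw⟩ := exists_isIdom hv hvs
  rcases hloc w v hw with h | ⟨a, b, hda, hdb, haw, hbw, hav, hvb⟩
  · obtain ⟨-, σ, hE, hnd, hcase⟩ := h
    rcases hcase with ⟨rfl, -⟩ | ⟨-, hii, -⟩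
    · exact Or.inl ⟨σ, hw, hE⟩
    · exact absurd rfl hii.1
  · obtain ⟨-, σ₁, hE1, hnd1, hc1⟩ := hda
    obtain ⟨-, σ₂, hE2, hnd2, hc2⟩ := hdb
    rcases hc1 with ⟨-, rfl⟩ | ⟨-, hia, hdaσ⟩
    · exact absurd rfl haw
    rcases hc2 with ⟨-, rfl⟩ | ⟨-, hib, hdbσ⟩
    · exact absurd rfl hbw
    have hr1 : Reachable E s σ₁ := reachable_of_not_dom hnd1
    have hr2 : Reachable E s σ₂ := reachable_of_not_dom hnd2
    have hra : Reachable E s a := reachable_of_dom hdaσ hr1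
    have hrw : Reachable E s w := reachable_of_dom hw.2.1 hv
    have h1 : δ σ₁ < δ v := by
      by_contra h
      push_neg at h
      have hdav : Dom E s a v := hpre.2.2 a σ₁ v hv hdaσ hav.le h
      have hanev : a ≠ v := fun he => absurd (he ▸ hav) (lt_irrefl _)
      have hdaw : Dom E s a w := hw.2.2 a hanev hdav
      have e1 : δ a ≤ δ w := hpre.2.1 a w hrw hdaw
      have e2 : δ w ≤ δ a := hpre.2.1 w a hra hia.2.1
      exact hpre.1 a w hra hrw haw (le_antisymm e1 e2)
    have h2 : δ v < δ σ₂ := lt_of_lt_of_le hvb (hpre.2.1 b σ₂ hr2 hdbσ)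
    exact Or.inr ⟨σ₁, σ₂, hE1, hE2, hr1, hr2, h1, h2, hnd2⟩

end Dominators
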